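/- Let C be a category, (T, η, μ) a monad on C, and G, B endofunctors on C with a natural isomorphism ρ : B ⋙ G ≅ G ⋙ B (i.e. ρ_X : G(B X) ≅ B(G X) naturally in X). Let B̄ be a Kleisli lifting of B along T, i.e. an endofunctor on the Kleisli category Kl(T) with B̄ ∘ Free = Free ∘ B, where Free : C ⥤ Kl(T) is the free functor. Then the assignment B̃ X = B X on objects and, for f : X ⟶ Y in Kl(T^G) (i.e. f : G X ⟶ G Y in Kl(T)), B̃ f = Free(ρ_X) ≫ B̄(f) ≫ Free(ρ_Y⁻¹), defines an endofunctor B̃ on Kl(T^G), and B̃ is a Kleisli lifting of B for the relative monad, i.e. B̃ ∘ L = L ∘ B. -/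

import Mathlib

open CategoryTheory

universe v u

variable {C : Type u} [Category.{v} C]

/-- The Kleisli category of the relative monad `T^G` induced by a monad `T` and
an endofunctor `G`: objects are those of `C`, and `Hom(X, Y) = Kl(T)(G X, G Y)`. -/
def RelKleisli (T : Monad C) (G : C ⥤ C) : Type u :=
  InducedCategory (Kleisli T) (fun X : C => (Kleisli.mk T (G.obj X) : Kleisli T))

instance (T : Monad C) (G : C ⥤ C) : Category (RelKleisli T G) :=
  inferInstanceAs (Category (InducedCategory (Kleisli T) (fun X : C => (Kleisli.mk T (G.obj X) : Kleisli T))))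

/-- The functor `L : C ⥤ Kl(T^G)` given by `L X = X` and `L f = Free (G f)`. -/
def relKleisliFree (T : Monad C) (G : C ⥤ C) : C ⥤ RelKleisli T G where
  obj X := X
  map f := InducedCategory.homMk ((Kleisli.Adjunction.toKleisli T).map (G.map f))
  map_id X := by simp only [CategoryTheory.Functor.map_id]; rfl
  map_comp f g := by simp only [CategoryTheory.Functor.map_comp]; rfl

/-- The candidate lifting on morphisms: for `f : X ⟶ Y` in `Kl(T^G)`,
`B̃ f = Free(ρ_X) ≫ B̄(f) ≫ Free(ρ_Y⁻¹)`. -/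
def relKleisliLiftMap (T : Monad C) (G B : C ⥤ C) (ρ : B ⋙ G ≅ G ⋙ B)
    (Bbar : Kleisli T ⥤ Kleisli T)
    (hBbar : Kleisli.Adjunction.toKleisli T ⋙ Bbar =
      B ⋙ Kleisli.Adjunction.toKleisli T)
    {X Y : C}
    (f : (relKleisliFree T G).obj X ⟶ (relKleisliFree T G).obj Y) :
    (relKleisliFree T G).obj (B.obj X) ⟶ (relKleisliFree T G).obj (B.obj Y) :=
  InducedCategory.homMk <| show (Kleisli.Adjunction.toKleisli T).obj (G.obj (B.obj X)) ⟶
      (Kleisli.Adjunction.toKleisli T).obj (G.obj (B.obj Y)) from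
    (Kleisli.Adjunction.toKleisli T).map (ρ.hom.app X) ≫
      eqToHom (Functor.congr_obj hBbar (G.obj X)).symm ≫
      Bbar.map (show (Kleisli.Adjunction.toKleisli T).obj (G.obj X) ⟶
          (Kleisli.Adjunction.toKleisli T).obj (G.obj Y) from f.hom) ≫
      eqToHom (Functor.congr_obj hBbar (G.obj Y)) ≫
      (Kleisli.Adjunction.toKleisli T).map (ρ.inv.app Y)

/-- If `G` preserves `B` (via `ρ : B ⋙ G ≅ G ⋙ B`) and `B` has a Kleisli lifting
`B̄` on `Kl(T)`, then `X ↦ B X`, `f ↦ Free(ρ_X) ≫ B̄(f) ≫ Free(ρ_Y⁻¹)` defines an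
endofunctor `B̃` on `Kl(T^G)`, which moreover is a Kleisli lifting of `B` for the
relative monad, i.e. `L ⋙ B̃ = B ⋙ L`. -/
theorem relative_kleisli_lifting (T : Monad C) (G B : C ⥤ C)
    (ρ : B ⋙ G ≅ G ⋙ B) (Bbar : Kleisli T ⥤ Kleisli T)
    (hBbar : Kleisli.Adjunction.toKleisli T ⋙ Bbar =
      B ⋙ Kleisli.Adjunction.toKleisli T) :
    ∃ (Btilde : RelKleisli T G ⥤ RelKleisli T G)
      (hobj : ∀ X : C, Btilde.obj ((relKleisliFree T G).obj X) =
        (relKleisliFree T G).obj (B.obj X)),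
      (∀ (X Y : C) (f : (relKleisliFree T G).obj X ⟶ (relKleisliFree T G).obj Y),
        Btilde.map f =
          eqToHom (hobj X) ≫ relKleisliLiftMap T G B ρ Bbar hBbar f ≫
            eqToHom (hobj Y).symm) ∧
      relKleisliFree T G ⋙ Btilde = B ⋙ relKleisliFree T G := by
  refine ⟨{ obj := fun X => B.obj X,
            map := fun {X Y} f => relKleisliLiftMap T G B ρ Bbar hBbar f,
            map_id := ?_, map_comp := ?_ }, fun _ => rfl, fun X Y f => by erw [eqToHom_refl, Category.id_comp, eqToHom_refl, Category.comp_id]; rfl, ?_⟩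
  · intro (X : C)
    apply InducedCategory.hom_ext
    show ((Kleisli.Adjunction.toKleisli T).map (ρ.hom.app X) ≫
      eqToHom (Functor.congr_obj hBbar (G.obj X)).symm ≫
      Bbar.map (𝟙 ((Kleisli.Adjunction.toKleisli T).obj (G.obj X))) ≫
      eqToHom (Functor.congr_obj hBbar (G.obj X)) ≫
      (Kleisli.Adjunction.toKleisli T).map (ρ.inv.app X) : _ ⟶ _) =
      𝟙 ((Kleisli.Adjunction.toKleisli T).obj (G.obj (B.obj X)))
    dsimp only [Functor.comp_obj]
    simp only [CategoryTheory.Functor.map_id, Category.id_comp, eqToHom_trans_assoc,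
      eqToHom_refl, ← CategoryTheory.Functor.map_comp, Iso.hom_inv_id_app]
    simp
  · intro X Y Z f g
    apply InducedCategory.hom_ext
    show ((Kleisli.Adjunction.toKleisli T).map (ρ.hom.app X) ≫
      eqToHom (Functor.congr_obj hBbar (G.obj X)).symm ≫
      Bbar.map ((show (Kleisli.Adjunction.toKleisli T).obj (G.obj X) ⟶
          (Kleisli.Adjunction.toKleisli T).obj (G.obj Y) from f.hom) ≫
        (show (Kleisli.Adjunction.toKleisli T).obj (G.obj Y) ⟶
          (Kleisli.Adjunction.toKleisli T).obj (G.obj Z) from g.hom)) ≫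
      eqToHom (Functor.congr_obj hBbar (G.obj Z)) ≫
      (Kleisli.Adjunction.toKleisli T).map (ρ.inv.app Z) : _ ⟶ _) =
      ((Kleisli.Adjunction.toKleisli T).map (ρ.hom.app X) ≫
      eqToHom (Functor.congr_obj hBbar (G.obj X)).symm ≫
      Bbar.map (show (Kleisli.Adjunction.toKleisli T).obj (G.obj X) ⟶
          (Kleisli.Adjunction.toKleisli T).obj (G.obj Y) from f.hom) ≫
      eqToHom (Functor.congr_obj hBbar (G.obj Y)) ≫
      (Kleisli.Adjunction.toKleisli T).map (ρ.inv.app Y)) ≫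
      ((Kleisli.Adjunction.toKleisli T).map (ρ.hom.app Y) ≫
      eqToHom (Functor.congr_obj hBbar (G.obj Y)).symm ≫
      Bbar.map (show (Kleisli.Adjunction.toKleisli T).obj (G.obj Y) ⟶
          (Kleisli.Adjunction.toKleisli T).obj (G.obj Z) from g.hom) ≫
      eqToHom (Functor.congr_obj hBbar (G.obj Z)) ≫
      (Kleisli.Adjunction.toKleisli T).map (ρ.inv.app Z))
    dsimp only [Functor.comp_obj]
    erw [CategoryTheory.Functor.map_comp]
    simp only [Category.assoc]
    erw [← CategoryTheory.Functor.map_comp_assoc (Kleisli.Adjunction.toKleisli T)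
      (ρ.inv.app Y) (ρ.hom.app Y), Iso.inv_hom_id_app,
      CategoryTheory.Functor.map_id, Category.id_comp,
      eqToHom_trans_assoc, eqToHom_refl, Category.id_comp]
  · refine CategoryTheory.Functor.ext (fun X => rfl) ?_
    intro X Y f
    show relKleisliLiftMap T G B ρ Bbar hBbar ((relKleisliFree T G).map f) =
      eqToHom rfl ≫ (relKleisliFree T G).map (B.map f) ≫ eqToHom rfl
    rw [eqToHom_refl, eqToHom_refl, Category.id_comp, Category.comp_id]
    apply InducedCategory.hom_ext
    show ((Kleisli.Adjunction.toKleisli T).map (ρ.hom.app X) ≫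
      eqToHom (Functor.congr_obj hBbar (G.obj X)).symm ≫
      Bbar.map ((Kleisli.Adjunction.toKleisli T).map (G.map f)) ≫
      eqToHom (Functor.congr_obj hBbar (G.obj Y)) ≫
      (Kleisli.Adjunction.toKleisli T).map (ρ.inv.app Y) : _ ⟶ _) =
      (Kleisli.Adjunction.toKleisli T).map (G.map (B.map f))
    dsimp only [Functor.comp_obj]
    have h1 := Functor.congr_hom hBbar (G.map f)
    simp only [Functor.comp_map, Functor.comp_obj] at h1
    rw [h1]
    simp only [Category.assoc, eqToHom_trans_assoc, eqToHom_refl, Category.id_comp]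
    rw [← CategoryTheory.Functor.map_comp_assoc, ← CategoryTheory.Functor.map_comp]
    congr 1
    have h2 := ρ.hom.naturality f
    simp only [Functor.comp_map] at h2
    rw [← h2, Category.assoc, Iso.hom_inv_id_app, Category.comp_id]
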